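/- Let N = 2^J, x ∈ ℝ^N, and for 0 ≤ j ≤ J define the reflected periodization x^{(J)} := x and x^{(j)} := x^{(j+1)}_{(0)} + J_{2^j} x^{(j+1)}_{(1)}, where x^{(j+1)}_{(0)} and x^{(j+1)}_{(1)} denote the first and second half of x^{(j+1)}. Then the DCT-II of x^{(j)} satisfies (x^{(j)})^II_k = (√2)^{J-j} · x^II_{2^{J-j} k} for all 0 ≤ k ≤ 2^j - 1, where x^II = C_N^II x. -/

import Mathlib

open Matrix

/-- The cosine matrix of type II of size `n`. -/
noncomputable def CII (n : ℕ) : Matrix (Fin n) (Fin n) ℝ :=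
  Matrix.of fun k l : Fin n =>
    Real.sqrt (2 / (n : ℝ)) * (if (k : ℕ) % n = 0 then 1 / Real.sqrt 2 else 1) *
      Real.cos ((k : ℕ) * (2 * (l : ℕ) + 1) * Real.pi / (2 * (n : ℝ)))

/-- The cosine matrix of type IV of size `n`. -/
noncomputable def CIV (n : ℕ) : Matrix (Fin n) (Fin n) ℝ :=
  Matrix.of fun k l : Fin n =>
    Real.sqrt (2 / (n : ℝ)) *
      Real.cos ((2 * (k : ℕ) + 1) * (2 * (l : ℕ) + 1) * Real.pi / (4 * (n : ℝ)))

/-- One step of reflected periodization: add the first half and the reflected second half. -/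
noncomputable def halfSum (n : ℕ) (x : Fin (2 * n) → ℝ) : Fin n → ℝ :=
  fun k => x ⟨(k : ℕ), by have := k.isLt; omega⟩ +
           x ⟨2 * n - 1 - (k : ℕ), by have := k.isLt; omega⟩

/-- Iterated reflected periodization, peeling off `s` halving steps. -/
noncomputable def perAux (j : ℕ) : (s : ℕ) → (Fin (2 ^ (j + s)) → ℝ) → Fin (2 ^ j) → ℝ
  | 0, x => x
  | s + 1, x => perAux j s (halfSum (2 ^ (j + s))
      (fun k => x (Fin.cast (by
        have h1 : j + (s + 1) = (j + s) + 1 := by omega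
        rw [h1, pow_succ]; ring) k)))

/-- The reflected periodization `x^{(j)}` of `x ∈ ℝ^{2^J}`. -/
noncomputable def reflPer (J j : ℕ) (h : j ≤ J) (x : Fin (2 ^ J) → ℝ) : Fin (2 ^ j) → ℝ :=
  perAux j (J - j) (fun k => x (Fin.cast (by rw [Nat.add_sub_cancel' h]) k))

lemma sum_split (n : ℕ) (f : Fin (2 * n) → ℝ) :
    ∑ m, f m = ∑ l : Fin n, (f ⟨(l : ℕ), by have := l.isLt; omega⟩ +
      f ⟨2 * n - 1 - (l : ℕ), by have := l.isLt; omega⟩) := by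
  set F : ℕ → ℝ := fun i => if h : i < 2 * n then f ⟨i, h⟩ else 0 with hF
  have hf : ∀ m : Fin (2 * n), f m = F (m : ℕ) := by
    intro m; simp [hF, m.isLt]
  calc ∑ m, f m = ∑ m : Fin (2*n), F (m : ℕ) := by simp_rw [hf]
    _ = ∑ i ∈ Finset.range (2*n), F i := Fin.sum_univ_eq_sum_range F (2*n)
    _ = ∑ i ∈ Finset.range (n+n), F i := by ring_nf
    _ = ∑ i ∈ Finset.range n, F i + ∑ i ∈ Finset.range n, F (n+i) :=
        Finset.sum_range_add F n n
    _ = ∑ i ∈ Finset.range n, F i + ∑ i ∈ Finset.range n, F (n+(n-1-i)) := by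
        rw [Finset.sum_range_reflect (fun i => F (n+i)) n]
    _ = ∑ l : Fin n, (F (l : ℕ) + F (2*n-1-(l : ℕ))) := by
        rw [Finset.sum_add_distrib, ← Fin.sum_univ_eq_sum_range (fun i => F i) n,
          ← Fin.sum_univ_eq_sum_range (fun i => F (n+(n-1-i))) n]
        congr 1
        apply Finset.sum_congr rfl
        intro l _
        congr 1
        omega
    _ = _ := by
        apply Finset.sum_congr rfl
        intro l _
        have h1 : (l : ℕ) < 2*n := by omega
        have h2 : 2*n-1-(l : ℕ) < 2*n := by omega
        simp [hF, h1, h2]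

lemma stepCII (n : ℕ) (hn : 0 < n) (x : Fin (2 * n) → ℝ) (k : Fin n) :
    (CII n).mulVec (halfSum n x) k
      = Real.sqrt 2 * (CII (2 * n)).mulVec x ⟨2 * (k : ℕ), by have := k.isLt; omega⟩ := by
  have hnR : (0:ℝ) < (n:ℝ) := by exact_mod_cast hn
  simp only [mulVec, dotProduct]
  rw [Finset.mul_sum, sum_split n (fun m => Real.sqrt 2 * (CII (2*n) ⟨2*(k:ℕ), by have := k.isLt; omega⟩ m * x m))]
  apply Finset.sum_congr rfl
  intro l _
  have hl := l.isLt
  have hk := k.isLt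
  -- coefficient lemmas
  have hcoef : Real.sqrt (2 / (n:ℝ)) = Real.sqrt 2 * Real.sqrt (2 / ((2*n : ℕ):ℝ)) := by
    rw [← Real.sqrt_mul (by norm_num)]
    congr 1
    push_cast
    field_simp
  have heps : (if (k : ℕ) % n = 0 then (1:ℝ) / Real.sqrt 2 else 1)
      = (if (2 * (k:ℕ)) % (2*n) = 0 then (1:ℝ) / Real.sqrt 2 else 1) := by
    rw [Nat.mod_eq_of_lt hk, Nat.mod_eq_of_lt (by omega)]
    congr 1
    simp only [eq_iff_iff]
    omega
  have hcos1 : Real.cos ((k:ℕ) * (2 * (l:ℕ) + 1) * Real.pi / (2 * (n:ℝ)))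
      = Real.cos ((2*(k:ℕ) : ℕ) * (2 * (l:ℕ) + 1) * Real.pi / (2 * ((2*n : ℕ):ℝ))) := by
    congr 1
    push_cast
    field_simp
  have hcast : ((2*n-1-(l:ℕ) : ℕ) : ℝ) = 2*(n:ℝ) - 1 - (l:ℕ) := by
    have h : 2*n-1-(l:ℕ) + ((l:ℕ)+1) = 2*n := by omega
    have h2 := congrArg (Nat.cast : ℕ → ℝ) h
    push_cast at h2
    linarith
  have hcos2 : Real.cos ((k:ℕ) * (2 * (l:ℕ) + 1) * Real.pi / (2 * (n:ℝ)))
      = Real.cos ((2*(k:ℕ) : ℕ) * (2 * ((2*n-1-(l:ℕ) : ℕ):ℝ) + 1) * Real.pi / (2 * ((2*n : ℕ):ℝ))) := by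
    have harg : ((2*(k:ℕ) : ℕ):ℝ) * (2 * ((2*n-1-(l:ℕ) : ℕ):ℝ) + 1) * Real.pi / (2 * ((2*n : ℕ):ℝ))
        = (k:ℕ) * (2 * Real.pi) - (k:ℕ) * (2 * (l:ℕ) + 1) * Real.pi / (2 * (n:ℝ)) := by
      rw [hcast]
      push_cast
      field_simp
      ring
    rw [harg, Real.cos_nat_mul_two_pi_sub]
  have hA : CII n k l = Real.sqrt 2 *
      CII (2*n) ⟨2*(k:ℕ), by omega⟩ ⟨(l:ℕ), by omega⟩ := by
    simp only [CII, Matrix.of_apply]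
    rw [hcoef, heps, hcos1]
    ring
  have hB : CII n k l = Real.sqrt 2 *
      CII (2*n) ⟨2*(k:ℕ), by omega⟩ ⟨2*n-1-(l:ℕ), by omega⟩ := by
    simp only [CII, Matrix.of_apply]
    rw [hcoef, heps, hcos2]
    ring
  show CII n k l * halfSum n x l = _
  rw [halfSum, mul_add]
  congr 1
  · rw [hA]; ring
  · rw [hB]; ring
lemma mulVec_CII_cast {m m' : ℕ} (h : m = m') (x : Fin m' → ℝ) (i : Fin m) :
    (CII m).mulVec (fun k => x (Fin.cast h k)) i = (CII m').mulVec x (Fin.cast h i) := by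
  subst h
  rfl

lemma aux_scalar {m : ℕ} (A : Matrix (Fin m) (Fin m) ℝ) (x : Fin m → ℝ) (i i' : Fin m)
    (h : (i : ℕ) = (i' : ℕ)) (s : ℕ) :
    (Real.sqrt 2) ^ s * (Real.sqrt 2 * A.mulVec x i)
      = (Real.sqrt 2) ^ (s + 1) * A.mulVec x i' := by
  have : i = i' := Fin.ext h
  subst this
  ring

lemma perAux_dct (j s : ℕ) (x : Fin (2 ^ (j + s)) → ℝ) (k : Fin (2 ^ j)) :
    (CII (2 ^ j)).mulVec (perAux j s x) k
      = (Real.sqrt 2) ^ s * (CII (2 ^ (j + s))).mulVec x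
          ⟨2 ^ s * (k : ℕ), by
            have hk := k.isLt
            have hpow : 2 ^ s * 2 ^ j = 2 ^ (j + s) := by rw [← pow_add]; ring_nf
            have hlt := Nat.mul_lt_mul_of_pos_left hk
              (by positivity : 0 < 2 ^ s)
            omega⟩ := by
  induction s with
  | zero =>
      simp only [pow_zero, one_mul, perAux]
      rfl
  | succ s ih =>
      show (CII (2 ^ j)).mulVec (perAux j s (halfSum (2 ^ (j + s)) _)) k = _
      rw [ih]
      rw [stepCII (2 ^ (j + s)) (by positivity)]
      rw [mulVec_CII_cast]
      apply aux_scalar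
      show 2 * (2 ^ s * (k : ℕ)) = 2 ^ (s + 1) * (k : ℕ)
      ring

theorem dctII_reflPer (J j : ℕ) (h : j ≤ J) (x : Fin (2 ^ J) → ℝ) (k : Fin (2 ^ j)) :
    (CII (2 ^ j)).mulVec (reflPer J j h x) k =
      (Real.sqrt 2) ^ (J - j) *
        (CII (2 ^ J)).mulVec x
          ⟨2 ^ (J - j) * (k : ℕ), by
            have hk := k.isLt
            have h0 : 0 < 2 ^ (J - j) := by positivity
            have hlt := mul_lt_mul_of_pos_left hk h0
            have hpow : 2 ^ (J - j) * 2 ^ j = 2 ^ J := by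
              rw [← pow_add]; congr 1; omega
            exact lt_of_lt_of_eq hlt hpow⟩ := by
  rw [reflPer, perAux_dct]
  congr 1
  rw [mulVec_CII_cast]
  apply congrArg
  exact Fin.ext rfl
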